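/- For every (l,m) with m ∈ ℕ, l ∈ {m, m-2, ..., -m}, the radial polynomial satisfies sup_{0 ≤ r ≤ 1} |R_m^{|l|}(r)| = 1, and in particular R_m^{|l|}(1) = 1. -/

import Mathlib

open Set Finset

/-- The radial (Zernike) polynomial `R_m^{|l|}` for `|l| ≤ m` with `m - |l|` even. -/
noncomputable def radialPoly (m l : ℕ) (r : ℝ) : ℝ :=
  ∑ j ∈ Finset.range ((m - l) / 2 + 1),
    (-1 : ℝ) ^ j * (Nat.factorial (m - j) : ℝ) /
      ((Nat.factorial j : ℝ) * (Nat.factorial ((m + l) / 2 - j) : ℝ) *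
        (Nat.factorial ((m - l) / 2 - j) : ℝ)) * r ^ (m - 2 * j)

namespace ZA
open Polynomial

lemma coeff_linear_pow (a b : ℝ) (n p : ℕ) :
    ((C a * X + C b) ^ n).coeff p = (n.choose p : ℝ) * a ^ p * b ^ (n - p) := by
  rw [add_pow, finset_sum_coeff]
  have hterm : ∀ k, (C a * X) ^ k * C b ^ (n - k) * (n.choose k : ℝ[X])
      = C (a ^ k * b ^ (n - k) * (n.choose k : ℝ)) * X ^ k := by
    intro k
    rw [mul_pow, ← C_pow, ← C_pow, ← C_eq_natCast, C_mul, C_mul]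
    ring
  by_cases hp : p ≤ n
  · rw [Finset.sum_eq_single p]
    · rw [hterm, coeff_C_mul, coeff_X_pow]
      simp; ring
    · intro k hk hkp
      rw [hterm, coeff_C_mul, coeff_X_pow]
      simp [hkp.symm]
    · intro h; exact absurd (Finset.mem_range.2 (Nat.lt_succ_of_le hp)) h
  · push_neg at hp
    rw [Nat.choose_eq_zero_of_lt hp]
    rw [Finset.sum_eq_zero]
    · simp
    · intro k hk
      rw [hterm, coeff_C_mul, coeff_X_pow]
      rw [Finset.mem_range] at hk
      rw [if_neg (by omega)]
      simp

noncomputable def pair (m : ℕ) (f g : ℝ[X]) : ℝ :=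
  ∑ p ∈ Finset.range (m+1), f.coeff p * g.coeff p * ((p.factorial : ℝ) * ((m-p).factorial : ℝ))

lemma pair_linear (m : ℕ) (a b c d : ℝ) :
    pair m ((C a * X + C b) ^ m) ((C c * X + C d) ^ m)
      = (m.factorial : ℝ) * (a * c + b * d) ^ m := by
  unfold pair
  conv_rhs => rw [add_pow, Finset.mul_sum]
  refine Finset.sum_congr rfl (fun p hp => ?_)
  rw [Finset.mem_range] at hp
  rw [coeff_linear_pow, coeff_linear_pow]
  have h : (m.choose p : ℝ) * (p.factorial : ℝ) * ((m-p).factorial : ℝ) = (m.factorial : ℝ) := by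
    exact_mod_cast congrArg (Nat.cast (R := ℝ))
      (Nat.choose_mul_factorial_mul_factorial (Nat.lt_succ_iff.mp hp))
  have expand : (m.factorial : ℝ) * ((a*c)^p * (b*d)^(m-p) * (m.choose p : ℝ))
      = ((m.choose p:ℝ) * (p.factorial : ℝ) * ((m-p).factorial : ℝ)) * ((a*c)^p * (b*d)^(m-p) * (m.choose p : ℝ)) := by rw [h]
  rw [expand, mul_pow, mul_pow]
  ring

lemma pair_sum (m n : ℕ) (c d : ℕ → ℝ) (F G : ℕ → ℝ[X]) :
    pair m (∑ k ∈ Finset.range n, C (c k) * F k) (∑ k ∈ Finset.range n, C (d k) * G k)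
      = ∑ k ∈ Finset.range n, ∑ k' ∈ Finset.range n, c k * d k' * pair m (F k) (G k') := by
  unfold pair
  simp only [finset_sum_coeff, coeff_C_mul]
  calc (∑ p ∈ Finset.range (m+1),
        ((∑ k ∈ Finset.range n, c k * (F k).coeff p) * ∑ k' ∈ Finset.range n, d k' * (G k').coeff p)
          * ((p.factorial : ℝ) * ((m-p).factorial : ℝ)))
      = ∑ p ∈ Finset.range (m+1), ∑ k ∈ Finset.range n, ∑ k' ∈ Finset.range n,
          c k * (F k).coeff p * (d k' * (G k').coeff p) * ((p.factorial : ℝ) * ((m-p).factorial : ℝ)) := by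
        refine Finset.sum_congr rfl fun p _ => ?_
        rw [Finset.sum_mul_sum, Finset.sum_mul]
        refine Finset.sum_congr rfl fun k _ => ?_
        rw [Finset.sum_mul]
    _ = ∑ k ∈ Finset.range n, ∑ p ∈ Finset.range (m+1), ∑ k' ∈ Finset.range n,
          c k * (F k).coeff p * (d k' * (G k').coeff p) * ((p.factorial : ℝ) * ((m-p).factorial : ℝ)) :=
        Finset.sum_comm
    _ = ∑ k ∈ Finset.range n, ∑ k' ∈ Finset.range n, ∑ p ∈ Finset.range (m+1),
          c k * (F k).coeff p * (d k' * (G k').coeff p) * ((p.factorial : ℝ) * ((m-p).factorial : ℝ)) :=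
        Finset.sum_congr rfl fun k _ => Finset.sum_comm
    _ = ∑ k ∈ Finset.range n, ∑ k' ∈ Finset.range n,
          c k * d k' * ∑ p ∈ Finset.range (m+1), (F k).coeff p * (G k').coeff p * ((p.factorial : ℝ) * ((m-p).factorial : ℝ)) := by
        refine Finset.sum_congr rfl fun k _ => Finset.sum_congr rfl fun k' _ => ?_
        rw [Finset.mul_sum]
        exact Finset.sum_congr rfl fun p _ => by ring

lemma ext_helper {n : ℕ} {c d : ℕ → ℝ}
    (h : ∀ t : ℝ, ∑ k ∈ Finset.range n, c k * t ^ k = ∑ k ∈ Finset.range n, d k * t ^ k)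
    {i : ℕ} (hi : i < n) : c i = d i := by
  have hp : (∑ k ∈ Finset.range n, C (c k) * X ^ k) = ∑ k ∈ Finset.range n, C (d k) * X ^ k := by
    refine Polynomial.funext fun t => ?_
    simp only [eval_finset_sum, eval_mul, eval_pow, eval_C, eval_X]
    exact h t
  have := congrArg (fun p => Polynomial.coeff p i) hp
  simp only [finset_sum_coeff, coeff_C_mul, coeff_X_pow] at this
  rwa [Finset.sum_eq_single i (fun k _ hk => by rw [if_neg (Ne.symm hk), mul_zero])
      (fun hmem => absurd (Finset.mem_range.2 hi) hmem),
    Finset.sum_eq_single i (fun k _ hk => by rw [if_neg (Ne.symm hk), mul_zero])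
      (fun hmem => absurd (Finset.mem_range.2 hi) hmem), if_pos rfl, mul_one, mul_one] at this

noncomputable def fP (m : ℕ) (r s : ℝ) (k : ℕ) : ℝ[X] :=
  (C r * X - C s) ^ k * (C s * X + C r) ^ (m - k)

lemma expand_lin (m : ℕ) (r s t : ℝ) :
    (C (t*r+s) * X + C (r - t*s)) ^ m
      = ∑ k ∈ Finset.range (m+1), C ((m.choose k : ℝ) * t^k) * fP m r s k := by
  have key : C (t*r+s) * X + C (r - t*s) = C t * (C r * X - C s) + (C s * X + C r) := by
    simp only [C_add, C_sub, C_mul]; ring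
  rw [key, add_pow]
  refine Finset.sum_congr rfl fun k hk => ?_
  rw [Finset.mem_range] at hk
  rw [mul_pow, ← C_pow, fP]
  rw [C_mul, ← C_eq_natCast]
  ring

lemma G_diag (m q : ℕ) (hq : q ≤ m) (r s : ℝ) (hrs : r^2 + s^2 = 1) :
    pair m (fP m r s q) (fP m r s q) = (q.factorial : ℝ) * ((m-q).factorial : ℝ) := by
  set G : ℕ → ℕ → ℝ := fun k k' => pair m (fP m r s k) (fP m r s k') with hG
  have E1 : ∀ t t' : ℝ,
      ∑ k ∈ Finset.range (m+1), ∑ k' ∈ Finset.range (m+1),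
        ((m.choose k : ℝ) * t^k) * ((m.choose k' : ℝ) * t'^k') * G k k'
      = (m.factorial : ℝ) * (t*t'+1)^m := by
    intro t t'
    rw [← pair_sum m (m+1) _ _ (fP m r s) (fP m r s), ← expand_lin, ← expand_lin, pair_linear]
    have : (t*r+s) * (t'*r+s) + (r - t*s) * (r - t'*s) = t*t'+1 := by
      linear_combination (t*t'+1) * hrs
    rw [this]
  -- step 2 : extract coefficient in t'
  have E2 : ∀ t : ℝ, ∑ k ∈ Finset.range (m+1),
      ((m.choose k : ℝ) * (m.choose q : ℝ) * G k q) * t^k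
      = ((m.factorial : ℝ) * (m.choose q : ℝ) * t^q) := by
    intro t
    have h := fun t' => E1 t t'
    have h2 : ∀ t' : ℝ,
        ∑ k' ∈ Finset.range (m+1),
          (∑ k ∈ Finset.range (m+1), (m.choose k : ℝ) * (m.choose k' : ℝ) * G k k' * t^k) * t'^k'
        = ∑ k' ∈ Finset.range (m+1), ((m.factorial : ℝ) * (m.choose k' : ℝ) * t^k') * t'^k' := by
      intro t'
      calc ∑ k' ∈ Finset.range (m+1),
            (∑ k ∈ Finset.range (m+1), (m.choose k : ℝ) * (m.choose k' : ℝ) * G k k' * t^k) * t'^k'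
          = ∑ k' ∈ Finset.range (m+1), ∑ k ∈ Finset.range (m+1),
            ((m.choose k : ℝ) * t^k) * ((m.choose k' : ℝ) * t'^k') * G k k' := by
            refine Finset.sum_congr rfl fun k' _ => ?_
            rw [Finset.sum_mul]
            exact Finset.sum_congr rfl fun k _ => by ring
        _ = (m.factorial : ℝ) * (t*t'+1)^m := Finset.sum_comm.trans (h t')
        _ = ∑ k' ∈ Finset.range (m+1), ((m.factorial : ℝ) * (m.choose k' : ℝ) * t^k') * t'^k' := by
            rw [add_pow, Finset.mul_sum]
            refine Finset.sum_congr rfl fun k' _ => ?_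
            rw [mul_pow]
            ring
    have := ext_helper h2 (Nat.lt_succ_of_le hq)
    calc ∑ k ∈ Finset.range (m+1), ((m.choose k : ℝ) * (m.choose q : ℝ) * G k q) * t^k
        = ∑ k ∈ Finset.range (m+1), (m.choose k : ℝ) * (m.choose q : ℝ) * G k q * t^k := by
          exact Finset.sum_congr rfl fun k _ => by ring
      _ = (m.factorial : ℝ) * (m.choose q : ℝ) * t^q := this
  -- step 3 : extract coefficient in t
  have E3 : (m.choose q : ℝ) * (m.choose q : ℝ) * G q q = (m.factorial : ℝ) * (m.choose q : ℝ) := by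
    have h3 : ∀ t : ℝ, ∑ k ∈ Finset.range (m+1),
        ((m.choose k : ℝ) * (m.choose q : ℝ) * G k q) * t^k
        = ∑ k ∈ Finset.range (m+1),
          (if k = q then (m.factorial : ℝ) * (m.choose q : ℝ) else 0) * t^k := by
      intro t
      rw [E2 t]
      rw [Finset.sum_congr rfl (fun k _ => by rw [ite_mul, zero_mul])]
      rw [Finset.sum_ite_eq' (Finset.range (m+1)) q (fun k => (m.factorial : ℝ) * (m.choose q : ℝ) * t^k)]
      rw [if_pos (Finset.mem_range.2 (Nat.lt_succ_of_le hq))]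
    have := ext_helper h3 (Nat.lt_succ_of_le hq)
    rwa [if_pos rfl] at this
  have hc : (m.choose q : ℝ) ≠ 0 := Nat.cast_ne_zero.mpr (Nat.choose_pos hq).ne'
  have hmf : (m.factorial : ℝ) = (m.choose q : ℝ) * (q.factorial : ℝ) * ((m-q).factorial : ℝ) := by
    exact_mod_cast congrArg (Nat.cast (R := ℝ)) (Nat.choose_mul_factorial_mul_factorial hq).symm
  refine mul_left_cancel₀ (mul_ne_zero hc hc) ?_
  calc (m.choose q : ℝ) * (m.choose q : ℝ) * (G q q) = (m.factorial : ℝ) * (m.choose q : ℝ) := E3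
    _ = (m.choose q : ℝ) * (m.choose q : ℝ) * ((q.factorial : ℝ) * ((m-q).factorial : ℝ)) := by
        rw [hmf]; ring

lemma coeff_abs_le (m q : ℕ) (hq : q ≤ m) (r s : ℝ) (hrs : r^2 + s^2 = 1) :
    |(fP m r s q).coeff q| ≤ 1 := by
  have hGd := G_diag m q hq r s hrs
  set a := (fP m r s q).coeff q with ha
  have hpos : (0:ℝ) < (q.factorial : ℝ) * ((m-q).factorial : ℝ) := by positivity
  have hterm : a * a * ((q.factorial : ℝ) * ((m-q).factorial : ℝ))
      ≤ pair m (fP m r s q) (fP m r s q) := by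
    unfold pair
    exact Finset.single_le_sum
      (f := fun p => (fP m r s q).coeff p * (fP m r s q).coeff p
        * ((p.factorial : ℝ) * ((m-p).factorial : ℝ)))
      (fun p _ => mul_nonneg (mul_self_nonneg _) (by positivity))
      (Finset.mem_range.2 (Nat.lt_succ_of_le hq))
  rw [hGd] at hterm
  have ha2 : a * a ≤ 1 := by nlinarith
  nlinarith [abs_nonneg a, sq_abs a, sq_nonneg a]

lemma coeff_fP (q k : ℕ) (hkq : k ≤ q) (r s : ℝ) :
    ((C r * X - C s) ^ q * (C s * X + C r) ^ k).coeff q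
      = ∑ j ∈ Finset.range (k+1),
          (-1:ℝ)^j * (q.choose j : ℝ) * (k.choose j : ℝ) * (s^2)^j * r^(q+k-2*j) := by
  rw [coeff_mul, Finset.Nat.sum_antidiagonal_eq_sum_range_succ_mk]
  have hg : ∀ i ∈ Finset.range (q+1),
      ((C r * X - C s) ^ q).coeff i * ((C s * X + C r) ^ k).coeff (q - i)
      = (fun j => (q.choose j : ℝ) * (k.choose j : ℝ) * ((-1:ℝ)^j) * s^(2*j)
          * (r^(q-j) * r^(k-j))) (q - i) := by
    intro i hi
    rw [Finset.mem_range] at hi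
    have h1 : (C r * X - C s : ℝ[X]) = C r * X + C (-s) := by rw [C_neg]; ring
    rw [h1, coeff_linear_pow, coeff_linear_pow]
    have hcs : (q.choose i : ℝ) = (q.choose (q - i) : ℝ) := by
      rw [← Nat.choose_symm (Nat.sub_le q i), Nat.sub_sub_self (by omega)]
    rw [hcs]
    have hneg : (-s)^(q-i) = (-1:ℝ)^(q-i) * s^(q-i) := by rw [neg_pow]
    have hqii : q - (q - i) = i := by omega
    simp only [hqii]
    rw [hneg, two_mul, pow_add]
    ring
  rw [Finset.sum_congr rfl hg]
  have hreflect := Finset.sum_range_reflect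
    (fun j => (q.choose j : ℝ) * (k.choose j : ℝ) * ((-1:ℝ)^j) * s^(2*j)
      * (r^(q-j) * r^(k-j))) (q+1)
  simp only [Nat.add_sub_cancel] at hreflect
  rw [hreflect]
  rw [← Finset.sum_subset (Finset.range_subset_range.2 (by omega : k + 1 ≤ q + 1))
    (fun j _ hj => by
      rw [Finset.mem_range, not_lt] at hj
      rw [Nat.choose_eq_zero_of_lt (by omega : k < j)]
      simp)]
  refine Finset.sum_congr rfl fun j hj => ?_
  rw [Finset.mem_range] at hj
  have hexp : q - j + (k - j) = q + k - 2*j := by omega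
  rw [← pow_add, hexp, ← pow_mul]
  ring

lemma key_nat (q k n : ℕ) (hkq : k ≤ q) (hn : n ≤ k) :
    ∑ j ∈ Finset.range (k+1), q.choose j * k.choose j * j.choose n
      = q.choose n * (q + k - n).choose (k - n) := by
  rw [Finset.range_eq_Ico,
    ← Finset.sum_Ico_consecutive _ (Nat.zero_le n) (by omega : n ≤ k + 1)]
  have h0 : ∑ j ∈ Finset.Ico 0 n, q.choose j * k.choose j * j.choose n = 0 :=
    Finset.sum_eq_zero fun j hj => by
      rw [Finset.mem_Ico] at hj
      rw [Nat.choose_eq_zero_of_lt hj.2, Nat.mul_zero]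
  rw [h0, zero_add, Finset.sum_Ico_eq_sum_range]
  have hterm : ∀ t ∈ Finset.range (k + 1 - n),
      q.choose (n + t) * k.choose (n + t) * (n + t).choose n
        = q.choose n * ((q - n).choose t * k.choose (n + t)) := by
    intro t ht
    rw [Finset.mem_range] at ht
    have hmc := Nat.choose_mul (n := q) (show n ≤ n + t by omega)
    rw [Nat.add_sub_cancel_left] at hmc
    calc q.choose (n + t) * k.choose (n + t) * (n + t).choose n
        = q.choose (n + t) * (n + t).choose n * k.choose (n + t) := by ring
      _ = q.choose n * (q - n).choose t * k.choose (n + t) := by rw [hmc]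
      _ = q.choose n * ((q - n).choose t * k.choose (n + t)) := by ring
  rw [Finset.sum_congr rfl hterm, ← Finset.mul_sum]
  congr 1
  have hV := Nat.add_choose_eq (q - n) k (k - n)
  rw [Finset.Nat.sum_antidiagonal_eq_sum_range_succ_mk] at hV
  have : q - n + k = q + k - n := by omega
  rw [this] at hV
  rw [hV]
  rw [show (k - n).succ = k + 1 - n by omega]
  refine Finset.sum_congr rfl fun t ht => ?_
  rw [Finset.mem_range] at ht
  congr 1
  rw [show k - n - t = k - (n + t) by omega, Nat.choose_symm (by omega)]

lemma key_fact (q k n : ℕ) (hkq : k ≤ q) (hn : n ≤ k) :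
    (q.choose n * (q + k - n).choose (k - n))
      * (n.factorial * (q - n).factorial * (k - n).factorial)
      = (q + k - n).factorial := by
  have h1 := Nat.choose_mul_factorial_mul_factorial (show n ≤ q by omega)
  have h2 := Nat.choose_mul_factorial_mul_factorial (show k - n ≤ q + k - n by omega)
  rw [show q + k - n - (k - n) = q by omega] at h2
  calc (q.choose n * (q + k - n).choose (k - n))
        * (n.factorial * (q - n).factorial * (k - n).factorial)
      = ((q + k - n).choose (k - n) * (k-n).factorial) * (q.choose n * n.factorial * (q-n).factorial) := by ring
    _ = ((q + k - n).choose (k - n) * (k-n).factorial) * q.factorial := by rw [h1]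
    _ = (q + k - n).factorial := by rw [← h2]

lemma radial_alt (m l : ℕ) (hlm : l ≤ m) (heven : Even (m - l)) (r : ℝ) :
    radialPoly m l r
      = ∑ j ∈ Finset.range ((m-l)/2 + 1),
          (-1:ℝ)^j * (((m+l)/2).choose j : ℝ) * (((m-l)/2).choose j : ℝ)
            * (1 - r^2)^j * r^(m - 2*j) := by
  obtain ⟨c, hc⟩ := heven
  set q := (m+l)/2 with hqdef
  set k := (m-l)/2 with hkdef
  have hk : k = c := by omega
  have hq : q = l + c := by omega
  have hkq : k ≤ q := by omega
  have hm : m = q + k := by omega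
  -- expand (1 - r^2)^j on the RHS
  have hrhs : ∀ j ∈ Finset.range (k+1),
      (-1:ℝ)^j * (q.choose j : ℝ) * (k.choose j : ℝ) * (1 - r^2)^j * r^(m - 2*j)
      = ∑ n ∈ Finset.range (k+1),
          (-1:ℝ)^n * ((q.choose j : ℝ) * (k.choose j : ℝ) * (j.choose n : ℝ)) * r^(m - 2*n) := by
    intro j hj
    rw [Finset.mem_range] at hj
    have hbin : (1 - r^2)^j = ∑ i ∈ Finset.range (j+1),
        (-(r^2))^i * (1:ℝ)^(j-i) * (j.choose i : ℝ) := by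
      rw [show (1 - r^2 : ℝ) = -(r^2) + 1 by ring, add_pow]
    rw [hbin]
    rw [Finset.mul_sum, Finset.sum_mul]
    -- reflect : i = j - n
    have hrefl := Finset.sum_range_reflect
      (fun i => (-1:ℝ)^j * (q.choose j : ℝ) * (k.choose j : ℝ)
        * ((-(r^2))^i * (1:ℝ)^(j-i) * (j.choose i : ℝ)) * r^(m - 2*j)) (j+1)
    simp only [Nat.add_sub_cancel] at hrefl
    rw [← hrefl]
    rw [← Finset.sum_subset (Finset.range_subset_range.2 (by omega : j + 1 ≤ k + 1))
      (fun n _ hn => by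
        rw [Finset.mem_range, not_lt] at hn
        rw [Nat.choose_eq_zero_of_lt (by omega : j < n)]
        push_cast
        ring)]
    refine Finset.sum_congr rfl fun n hn => ?_
    rw [Finset.mem_range] at hn
    have h2j : 2*j ≤ m := by omega
    have hjn : n ≤ j := by omega
    rw [Nat.choose_symm hjn]
    have hsign : (-1:ℝ)^j * (-1:ℝ)^(j-n) = (-1:ℝ)^n := by
      rw [← pow_add, show j + (j - n) = 2*(j-n) + n by omega, pow_add, pow_mul]
      norm_num
    have hpow : r^(m-2*j) * r^(2*(j-n)) = r^(m-2*n) := by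
      rw [← pow_add, show m - 2*j + 2*(j-n) = m - 2*n by omega]
    have hneg : (-(r^2) : ℝ)^(j-n) = (-1:ℝ)^(j-n) * r^(2*(j-n)) := by
      rw [neg_pow, pow_mul]
    rw [hneg, one_pow, mul_one]
    calc (-1:ℝ)^j * (q.choose j:ℝ) * (k.choose j:ℝ) * ((-1:ℝ)^(j-n) * r^(2*(j-n)) * (j.choose n:ℝ)) * r^(m-2*j)
        = ((-1:ℝ)^j * (-1:ℝ)^(j-n)) * ((q.choose j:ℝ) * (k.choose j:ℝ) * (j.choose n:ℝ)) * (r^(m-2*j) * r^(2*(j-n))) := by ring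
      _ = (-1:ℝ)^n * ((q.choose j:ℝ) * (k.choose j:ℝ) * (j.choose n:ℝ)) * r^(m-2*n) := by rw [hsign, hpow]
  rw [Finset.sum_congr rfl hrhs, Finset.sum_comm]
  unfold radialPoly
  rw [← hkdef, ← hqdef]
  refine Finset.sum_congr rfl fun n hn => ?_
  rw [Finset.mem_range] at hn
  rw [← Finset.sum_mul, ← Finset.mul_sum]
  have hcast : (∑ j ∈ Finset.range (k+1),
      (q.choose j : ℝ) * (k.choose j : ℝ) * (j.choose n : ℝ))
      = ((q.choose n * (q + k - n).choose (k - n) : ℕ) : ℝ) := by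
    rw [← key_nat q k n hkq (by omega)]
    push_cast
    rfl
  rw [hcast]
  have hfact := key_fact q k n hkq (by omega)
  have hfpos : ((n.factorial : ℝ) * ((q-n).factorial : ℝ) * ((k-n).factorial : ℝ)) ≠ 0 := by
    positivity
  have hfr : ((q.choose n * (q + k - n).choose (k - n) : ℕ) : ℝ)
      = ((q + k - n).factorial : ℝ) / ((n.factorial : ℝ) * ((q-n).factorial : ℝ) * ((k-n).factorial : ℝ)) := by
    rw [eq_div_iff hfpos]
    exact_mod_cast congrArg (Nat.cast (R := ℝ)) hfact
  rw [hfr, show q + k - n = m - n by omega]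
  ring

end ZA

/-- For admissible `(l,m)` the radial polynomial satisfies
`sup_{0 ≤ r ≤ 1} |R_m^{|l|}(r)| = 1`, and in particular `R_m^{|l|}(1) = 1`. -/
theorem radialPoly_sup_eq_one (m l : ℕ) (hlm : l ≤ m) (heven : Even (m - l)) :
    sSup ((fun r => |radialPoly m l r|) '' Set.Icc (0 : ℝ) 1) = 1 ∧
      radialPoly m l 1 = 1 := by
  have hbound : ∀ r ∈ Set.Icc (0:ℝ) 1, |radialPoly m l r| ≤ 1 := by
    intro r hr
    obtain ⟨c, hc⟩ := heven
    set q := (m+l)/2 with hqdef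
    set k := (m-l)/2 with hkdef
    have hkq : k ≤ q := by omega
    have hm : m = q + k := by omega
    have hq : q ≤ m := by omega
    set s := Real.sqrt (1 - r^2) with hsdef
    have hs2 : s^2 = 1 - r^2 := Real.sq_sqrt (by nlinarith [hr.1, hr.2])
    have hrs : r^2 + s^2 = 1 := by rw [hs2]; ring
    have h1 : radialPoly m l r = (ZA.fP m r s q).coeff q := by
      rw [ZA.radial_alt m l hlm ⟨c, hc⟩ r, ZA.fP, show m - q = k by omega,
        ZA.coeff_fP q k hkq r s, ← hkdef, ← hqdef]
      refine Finset.sum_congr rfl fun j hj => ?_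
      rw [hs2, show q + k - 2*j = m - 2*j by omega]
    rw [h1]
    exact ZA.coeff_abs_le m q hq r s hrs
  have hval : radialPoly m l 1 = 1 := by
    rw [ZA.radial_alt m l hlm heven 1]
    rw [Finset.sum_eq_single 0]
    · norm_num
    · intro j _ hj
      have : ((1:ℝ) - 1^2)^j = 0 := by
        rw [show ((1:ℝ) - 1^2) = 0 by norm_num, zero_pow hj]
      rw [this]
      ring
    · intro h
      exact absurd (Finset.mem_range.2 (Nat.succ_pos _)) h
  refine ⟨?_, hval⟩
  apply IsGreatest.csSup_eq
  constructor
  · exact ⟨1, ⟨zero_le_one, le_refl 1⟩, by simp only [hval]; exact abs_one⟩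
  · rintro y ⟨r, hrmem, rfl⟩
    exact hbound r hrmem
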